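/- Let n ≥ 2 and let r̂_1,…,r̂_n be positive keys with pairwise distinct values, and let k ≤ n. As the temperature t tends to 0 from above, the relaxed k-hot output a_i(t) = Σ_{j=1}^k p_i^j(t) of the iterative softmax top-k relaxation converges to 1 if r̂_i is among the k largest of the keys and converges to 0 otherwise; that is, the relaxed output converges to the exact k-hot indicator vector of the top-k keys. -/

import Mathlib

open Filter

/-- Tempered softmax of logits `α : Fin n → ℝ` at temperature `t`. -/
noncomputable def softmaxT {n : ℕ} (t : ℝ) (α : Fin n → ℝ) (i : Fin n) : ℝ :=
  Real.exp (α i / t) / ∑ m, Real.exp (α m / t)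

/-- Logits of the iterative softmax top-k relaxation: `alphaIter t r j` is `α^{j+1}`
(the logits used at the `(j+1)`-th step, 0-indexed). -/
noncomputable def alphaIter {n : ℕ} (t : ℝ) (r : Fin n → ℝ) : ℕ → Fin n → ℝ
  | 0 => fun i => Real.log (r i)
  | j + 1 => fun i =>
      alphaIter t r j i + Real.log (1 - softmaxT t (alphaIter t r j) i)

/-- `pIter t r j i` is the softmax value `p_i^{j+1}` at the `(j+1)`-th step (0-indexed `j`). -/
noncomputable def pIter {n : ℕ} (t : ℝ) (r : Fin n → ℝ) (j : ℕ) (i : Fin n) : ℝ :=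
  softmaxT t (alphaIter t r j) i

namespace TopKAux

noncomputable def W {n : ℕ} (t : ℝ) (r : Fin n → ℝ) (j : ℕ) (i : Fin n) : ℝ :=
  Real.exp (alphaIter t r j i / t)

lemma W_pos {n : ℕ} {t : ℝ} {r : Fin n → ℝ} {j : ℕ} {i : Fin n} : 0 < W t r j i :=
  Real.exp_pos _

lemma sum_W_pos {n : ℕ} (hn : 2 ≤ n) {t : ℝ} {r : Fin n → ℝ} {j : ℕ} :
    0 < ∑ m, W t r j m := by
  apply Finset.sum_pos (fun m _ => W_pos)
  exact Finset.univ_nonempty_iff.mpr (Fin.pos_iff_nonempty.mp (by omega))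

lemma pIter_eq {n : ℕ} (t : ℝ) (r : Fin n → ℝ) (j : ℕ) (i : Fin n) :
    pIter t r j i = W t r j i / ∑ m, W t r j m := rfl

lemma pIter_pos {n : ℕ} (hn : 2 ≤ n) {t : ℝ} {r : Fin n → ℝ} {j : ℕ} {i : Fin n} :
    0 < pIter t r j i := div_pos W_pos (sum_W_pos hn)

lemma pIter_lt_one {n : ℕ} (hn : 2 ≤ n) {t : ℝ} {r : Fin n → ℝ} {j : ℕ} {i : Fin n} :
    pIter t r j i < 1 := by
  rw [pIter_eq, div_lt_one (sum_W_pos hn)]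
  obtain ⟨m, hm⟩ := Fintype.exists_ne_of_one_lt_card (by simp; omega) i
  exact Finset.single_lt_sum hm (Finset.mem_univ i) (Finset.mem_univ m) W_pos
    (fun k _ _ => W_pos.le)

lemma W_zero {n : ℕ} {t : ℝ} {r : Fin n → ℝ} {i : Fin n} (hri : 0 < r i) :
    W t r 0 i = r i ^ (1/t) := by
  rw [W, Real.rpow_def_of_pos hri, mul_one_div]
  rfl

lemma W_succ {n : ℕ} (hn : 2 ≤ n) {t : ℝ} {r : Fin n → ℝ} {j : ℕ} {i : Fin n} :
    W t r (j+1) i = W t r j i * (1 - pIter t r j i) ^ (1/t) := by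
  have h1 : 0 < 1 - pIter t r j i := by linarith [pIter_lt_one hn (t := t) (r := r) (j := j) (i := i)]
  rw [W, show alphaIter t r (j+1) i = alphaIter t r j i + Real.log (1 - pIter t r j i) from rfl,
    add_div, Real.exp_add, Real.rpow_def_of_pos h1, mul_one_div]
  rfl




noncomputable def rk {n : ℕ} (r : Fin n → ℝ) (i : Fin n) : ℕ :=
  (Finset.univ.filter fun m => r i < r m).card

lemma rk_lt {n : ℕ} (r : Fin n → ℝ) (i : Fin n) : rk r i < n := by
  have h : (Finset.univ.filter fun m => r i < r m) ⊂ Finset.univ := by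
    refine Finset.ssubset_univ_iff.mpr ?_
    intro h
    have := h ▸ Finset.mem_univ i
    simp at this
  simpa [rk] using Finset.card_lt_card h

lemma rk_lt_rk_of_lt {n : ℕ} {r : Fin n → ℝ} {i m : Fin n} (h : r i < r m) :
    rk r m < rk r i := by
  apply Finset.card_lt_card
  constructor
  · intro l hl
    simp only [Finset.mem_filter, Finset.mem_univ, true_and] at hl ⊢
    exact h.trans hl
  · intro hsub
    have := hsub (by simp [h] : m ∈ Finset.univ.filter fun l => r i < r l)
    simp at this

lemma rk_inj {n : ℕ} {r : Fin n → ℝ} (hinj : Function.Injective r) :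
    Function.Injective (rk r) := by
  intro i m h
  by_contra hne
  rcases lt_trichotomy (r i) (r m) with hlt | heq | hgt
  · exact absurd h (by have := rk_lt_rk_of_lt hlt; omega)
  · exact hne (hinj heq)
  · exact absurd h (by have := rk_lt_rk_of_lt hgt; omega)

lemma lt_of_rk_lt {n : ℕ} {r : Fin n → ℝ} (hinj : Function.Injective r) {i m : Fin n}
    (h : rk r i < rk r m) : r m < r i := by
  rcases lt_trichotomy (r m) (r i) with hlt | heq | hgt
  · exact hlt
  · exact absurd h (by rw [hinj heq]; omega)
  · exact absurd h (by have := rk_lt_rk_of_lt hgt; omega)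

lemma exists_rk_eq {n : ℕ} {r : Fin n → ℝ} (hinj : Function.Injective r) {j : ℕ}
    (hj : j < n) : ∃ μ, rk r μ = j := by
  have hsurj : Function.Surjective (fun i => (⟨rk r i, rk_lt r i⟩ : Fin n)) := by
    rw [← Finite.injective_iff_surjective]
    intro a b hab
    exact rk_inj hinj (by simpa using congrArg Fin.val hab)
  obtain ⟨μ, hμ⟩ := hsurj ⟨j, hj⟩
  exact ⟨μ, by simpa using congrArg Fin.val hμ⟩

/-- the filter `t → 0⁺` -/
notation "L" => nhdsWithin (0:ℝ) (Set.Ioi 0)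

lemma ev_pos : ∀ᶠ t : ℝ in L, 0 < t :=
  eventually_of_mem self_mem_nhdsWithin (fun _ ht => ht)

lemma tendsto_id_L : Filter.Tendsto (fun t : ℝ => t) L (nhds 0) :=
  Filter.tendsto_id.mono_right nhdsWithin_le_nhds

lemma tendsto_rpow_base_lt_one {c : ℝ} (hc0 : 0 ≤ c) (hc1 : c < 1) :
    Filter.Tendsto (fun t : ℝ => c ^ (1/t)) L (nhds 0) := by
  rcases eq_or_lt_of_le hc0 with h | h
  · apply Filter.Tendsto.congr' _ tendsto_const_nhds
    filter_upwards [ev_pos] with t ht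
    rw [← h, Real.zero_rpow (by positivity)]
  · have hlog : Real.log c < 0 := Real.log_neg h hc1
    have h1 : Filter.Tendsto (fun t : ℝ => Real.log c * (1/t)) L Filter.atBot := by
      simpa [one_div] using (tendsto_inv_nhdsGT_zero).const_mul_atTop_of_neg hlog
    have := Real.tendsto_exp_atBot.comp h1
    apply this.congr'
    filter_upwards [ev_pos] with t ht
    simp [Function.comp, Real.rpow_def_of_pos h]

lemma tendsto_rpow_div_t {c : ℝ} (hc0 : 0 < c) (hc1 : c < 1) :
    Filter.Tendsto (fun t : ℝ => c ^ (1/t) / t) L (nhds 0) := by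
  have hlog : 0 < -Real.log c := by
    have := Real.log_neg hc0 hc1; linarith
  have h1 : Filter.Tendsto (fun x : ℝ => x * Real.exp (-x)) Filter.atTop (nhds 0) := by
    simpa using Real.tendsto_pow_mul_exp_neg_atTop_nhds_zero 1
  have h2 : Filter.Tendsto (fun t : ℝ => (-Real.log c) * (1/t)) L Filter.atTop := by
    simpa [one_div] using (tendsto_inv_nhdsGT_zero).const_mul_atTop hlog
  have h3 := ((h1.comp h2).const_mul (1 / (-Real.log c)))
  rw [mul_zero] at h3
  apply h3.congr'
  filter_upwards [ev_pos] with t ht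
  have hne : Real.log c ≠ 0 := by linarith
  field_simp [Function.comp]
  rw [Real.rpow_def_of_pos hc0, mul_one_div]
  simp only [Function.comp, neg_neg]
  field_simp



open Filter

lemma tendsto_one_sub_rpow {f : ℝ → ℝ}
    (hf01 : ∀ᶠ t : ℝ in L, 0 < f t ∧ f t < 1)
    (hdiv : Tendsto (fun t => f t / t) L (nhds 0)) :
    Tendsto (fun t => (1 - f t) ^ (1/t)) L (nhds 1) := by
  have hf0 : Tendsto f L (nhds 0) := by
    have h := hdiv.mul tendsto_id_L
    rw [mul_zero] at h
    apply h.congr'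
    filter_upwards [ev_pos] with t ht
    field_simp
  have hsmall : ∀ᶠ t : ℝ in L, f t < 1/2 :=
    hf0.eventually_lt_const (by norm_num)
  have hsq : Tendsto (fun t => Real.log (1 - f t) / t) L (nhds 0) := by
    have hlow : Tendsto (fun t => -2 * (f t / t)) L (nhds 0) := by
      simpa using hdiv.const_mul (-2)
    apply tendsto_of_tendsto_of_tendsto_of_le_of_le' hlow tendsto_const_nhds
    · filter_upwards [ev_pos, hf01, hsmall] with t ht h01 hhalf
      have h1f : 0 < 1 - f t := by linarith [h01.2]
      have hkey : -(2 * f t) ≤ Real.log (1 - f t) := by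
        have hlog := Real.log_le_sub_one_of_pos (inv_pos.mpr h1f)
        rw [Real.log_inv] at hlog
        have h5 : (1 - f t)⁻¹ ≤ 1 + 2 * f t := by
          rw [inv_eq_one_div, div_le_iff₀ h1f]
          nlinarith [h01.1]
        linarith
      rw [show -2 * (f t / t) = (-(2 * f t)) / t by ring]
      exact (div_le_div_iff_of_pos_right ht).mpr hkey
    · filter_upwards [ev_pos, hf01] with t ht h01
      apply div_nonpos_of_nonpos_of_nonneg _ ht.le
      exact Real.log_nonpos (by linarith [h01.1]) (by linarith [h01.1])
  have hexp := (Real.continuous_exp.tendsto 0).comp hsq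
  rw [Real.exp_zero] at hexp
  apply hexp.congr'
  filter_upwards [ev_pos, hf01] with t ht h01
  have h1f : 0 < 1 - f t := by linarith [h01.2]
  simp only [Function.comp]
  rw [Real.rpow_def_of_pos h1f, mul_one_div]



open Filter

variable {n : ℕ} {r : Fin n → ℝ}

lemma numer_lim (hn : 2 ≤ n) (hr : ∀ i, 0 < r i) (hinj : Function.Injective r) {j : ℕ}
    (IHa : ∀ i, j ≤ rk r i → Tendsto (fun t => W t r j i / r i ^ (1/t)) L (nhds 1))
    (IHb : ∀ i m, rk r i < j → j ≤ rk r m → Tendsto (fun t => W t r j i / r m ^ (1/t)) L (nhds 0))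
    {μ : Fin n} (hμ : rk r μ = j) (i : Fin n) :
    Tendsto (fun t => W t r j i / r μ ^ (1/t)) L (nhds (if i = μ then 1 else 0)) := by
  rcases lt_trichotomy (rk r i) j with h | h | h
  · rw [if_neg (fun he => by rw [he] at h; omega)]
    exact IHb i μ h hμ.ge
  · have hiμ : i = μ := rk_inj hinj (h.trans hμ.symm)
    rw [if_pos hiμ, hiμ]
    exact IHa μ hμ.ge
  · rw [if_neg (fun he => by rw [he, hμ] at h; omega)]
    have hlt : r i < r μ := lt_of_rk_lt hinj (by omega)
    have h1 := (IHa i h.le).mul (tendsto_rpow_base_lt_one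
      (div_nonneg (hr i).le (hr μ).le) ((div_lt_one (hr μ)).mpr hlt))
    rw [one_mul] at h1
    apply h1.congr'
    filter_upwards [ev_pos] with t ht
    rw [Real.div_rpow (hr i).le (hr μ).le]
    have hbi : r i ^ (1/t) ≠ 0 := (Real.rpow_pos_of_pos (hr i) _).ne'
    field_simp

lemma sum_lim (hn : 2 ≤ n) (hr : ∀ i, 0 < r i) (hinj : Function.Injective r) {j : ℕ}
    (IHa : ∀ i, j ≤ rk r i → Tendsto (fun t => W t r j i / r i ^ (1/t)) L (nhds 1))
    (IHb : ∀ i m, rk r i < j → j ≤ rk r m → Tendsto (fun t => W t r j i / r m ^ (1/t)) L (nhds 0))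
    {μ : Fin n} (hμ : rk r μ = j) :
    Tendsto (fun t => (∑ m, W t r j m) / r μ ^ (1/t)) L (nhds 1) := by
  have h := tendsto_finset_sum (f := fun m t => W t r j m / r μ ^ (1/t))
    (a := fun m => if m = μ then (1:ℝ) else 0) Finset.univ
    (fun m _ => numer_lim hn hr hinj IHa IHb hμ m)
  rw [Finset.sum_ite_eq' Finset.univ μ (fun _ => (1:ℝ)), if_pos (Finset.mem_univ μ)] at h
  apply h.congr'
  filter_upwards with t
  rw [Finset.sum_div]

lemma p_lim (hn : 2 ≤ n) (hr : ∀ i, 0 < r i) (hinj : Function.Injective r) {j : ℕ}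
    (IHa : ∀ i, j ≤ rk r i → Tendsto (fun t => W t r j i / r i ^ (1/t)) L (nhds 1))
    (IHb : ∀ i m, rk r i < j → j ≤ rk r m → Tendsto (fun t => W t r j i / r m ^ (1/t)) L (nhds 0))
    {μ : Fin n} (hμ : rk r μ = j) (i : Fin n) :
    Tendsto (fun t => pIter t r j i) L (nhds (if i = μ then 1 else 0)) := by
  have h := (numer_lim hn hr hinj IHa IHb hμ i).div (sum_lim hn hr hinj IHa IHb hμ) one_ne_zero
  rw [div_one] at h
  apply h.congr'
  filter_upwards [ev_pos] with t ht
  rw [pIter_eq]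
  have hc : r μ ^ (1/t) ≠ 0 := (Real.rpow_pos_of_pos (hr μ) _).ne'
  have hs : (∑ m, W t r j m) ≠ 0 := (sum_W_pos hn).ne'
  simp only [Pi.div_apply]
  field_simp

lemma p_div_t_lim (hn : 2 ≤ n) (hr : ∀ i, 0 < r i) (hinj : Function.Injective r) {j : ℕ}
    (IHa : ∀ i, j ≤ rk r i → Tendsto (fun t => W t r j i / r i ^ (1/t)) L (nhds 1))
    {μ : Fin n} (hμ : rk r μ = j) (i : Fin n) (hi : j < rk r i) :
    Tendsto (fun t => pIter t r j i / t) L (nhds 0) := by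
  have hlt : r i < r μ := lt_of_rk_lt hinj (by omega)
  have hA := IHa i hi.le
  have hB := tendsto_rpow_div_t (div_pos (hr i) (hr μ)) ((div_lt_one (hr μ)).mpr hlt)
  have hC : Tendsto (fun t => (W t r j μ / r μ ^ (1/t))⁻¹) L (nhds 1) := by
    have := (IHa μ hμ.ge).inv₀ one_ne_zero
    simpa using this
  have hbound := (hA.mul hB).mul hC
  rw [one_mul, zero_mul] at hbound
  apply tendsto_of_tendsto_of_tendsto_of_le_of_le' tendsto_const_nhds hbound
  · filter_upwards [ev_pos] with t ht
    exact div_nonneg (pIter_pos hn).le ht.le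
  · filter_upwards [ev_pos] with t ht
    have hWμS : W t r j μ ≤ ∑ m, W t r j m :=
      Finset.single_le_sum (fun m _ => (W_pos (t := t) (r := r) (j := j) (i := m)).le) (Finset.mem_univ μ)
    have hp_le : pIter t r j i ≤ W t r j i / W t r j μ := by
      rw [pIter_eq]
      exact div_le_div_of_nonneg_left W_pos.le W_pos hWμS
    have hstep : pIter t r j i / t ≤ (W t r j i / W t r j μ) / t :=
      (div_le_div_iff_of_pos_right ht).mpr hp_le
    refine hstep.trans (le_of_eq ?_)
    have h1 : r i ^ (1/t) ≠ 0 := (Real.rpow_pos_of_pos (hr i) _).ne'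
    have h2 : r μ ^ (1/t) ≠ 0 := (Real.rpow_pos_of_pos (hr μ) _).ne'
    have h3 : W t r j μ ≠ 0 := W_pos.ne'
    rw [Real.div_rpow (hr i).le (hr μ).le]
    field_simp



open Filter

variable {n : ℕ} {r : Fin n → ℝ}

lemma key (hn : 2 ≤ n) (hr : ∀ i, 0 < r i) (hinj : Function.Injective r) : ∀ j : ℕ,
    (∀ i, j ≤ rk r i → Tendsto (fun t => W t r j i / r i ^ (1/t)) L (nhds 1)) ∧
    (∀ i m, rk r i < j → j ≤ rk r m → Tendsto (fun t => W t r j i / r m ^ (1/t)) L (nhds 0)) := by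
  intro j
  induction j with
  | zero =>
    refine ⟨fun i _ => ?_, fun i m h _ => by omega⟩
    apply Filter.Tendsto.congr' _ (tendsto_const_nhds (x := (1:ℝ)))
    filter_upwards [ev_pos] with t ht
    rw [W_zero (hr i), div_self (Real.rpow_pos_of_pos (hr i) _).ne']
  | succ j IH =>
    obtain ⟨IHa, IHb⟩ := IH
    constructor
    · intro i hi
      have hjn : j < n := by have := rk_lt r i; omega
      obtain ⟨μ, hμ⟩ := exists_rk_eq hinj hjn
      have hpt := p_div_t_lim hn hr hinj IHa hμ i (by omega)
      have h1 := tendsto_one_sub_rpow (f := fun t => pIter t r j i)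
        (eventually_of_mem self_mem_nhdsWithin
          (fun t _ => ⟨pIter_pos hn, pIter_lt_one hn⟩)) hpt
      have h2 := (IHa i (by omega)).mul h1
      rw [mul_one] at h2
      apply h2.congr'
      filter_upwards [ev_pos] with t ht
      rw [W_succ hn]
      ring
    · intro i m hi hm
      have hjn : j < n := by have := rk_lt r m; omega
      obtain ⟨μ, hμ⟩ := exists_rk_eq hinj hjn
      rcases Nat.lt_succ_iff_lt_or_eq.mp hi with h | h
      · have hb := IHb i m h (by omega)
        apply tendsto_of_tendsto_of_tendsto_of_le_of_le' tendsto_const_nhds hb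
        · filter_upwards [ev_pos] with t ht
          exact div_nonneg W_pos.le (Real.rpow_pos_of_pos (hr m) _).le
        · filter_upwards [ev_pos] with t ht
          have hnum : W t r (j+1) i ≤ W t r j i := by
            rw [W_succ hn]
            exact mul_le_of_le_one_right W_pos.le
              (Real.rpow_le_one
                (by linarith [pIter_lt_one hn (t := t) (r := r) (j := j) (i := i)])
                (by linarith [pIter_pos hn (t := t) (r := r) (j := j) (i := i)])
                (by positivity))
          gcongr
          exact (Real.rpow_pos_of_pos (hr m) _).le
      · -- rk r i = j, so i = μ
        have hiμ : i = μ := rk_inj hinj (by rw [h, hμ])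
        subst hiμ
        have hrm : r m < r i := lt_of_rk_lt hinj (by omega)
        have hp1 : Tendsto (fun t => pIter t r j i) L (nhds 1) := by
          have := p_lim hn hr hinj IHa IHb hμ i
          simpa using this
        have h1p : Tendsto (fun t => 1 - pIter t r j i) L (nhds 0) := by
          have := (tendsto_const_nhds (x := (1:ℝ))).sub hp1
          simpa using this
        have hev : ∀ᶠ t : ℝ in L, (1 - pIter t r j i) * (r i / r m) ≤ 1/2 := by
          have hx := h1p.eventually_lt_const
            (show (0:ℝ) < r m / r i / 2 from by
              have := div_pos (hr m) (hr i); linarith)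
          filter_upwards [hx] with t hxt
          have h3 : (1 - pIter t r j i) * (r i / r m) ≤ (r m / r i / 2) * (r i / r m) :=
            mul_le_mul_of_nonneg_right hxt.le (div_nonneg (hr i).le (hr m).le)
          refine h3.trans (le_of_eq ?_)
          have h1 : r i ≠ 0 := (hr i).ne'
          have h2 : r m ≠ 0 := (hr m).ne'
          field_simp
        have hsecond : Tendsto (fun t => ((1 - pIter t r j i) * (r i / r m)) ^ (1/t)) L (nhds 0) := by
          apply tendsto_of_tendsto_of_tendsto_of_le_of_le' tendsto_const_nhds
            (tendsto_rpow_base_lt_one (by norm_num) (by norm_num : (1:ℝ)/2 < 1))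
          · filter_upwards [ev_pos] with t ht
            exact Real.rpow_nonneg
              (mul_nonneg (by linarith [pIter_lt_one hn (t := t) (r := r) (j := j) (i := i)])
                (div_nonneg (hr i).le (hr m).le)) _
          · filter_upwards [ev_pos, hev] with t ht h2
            exact Real.rpow_le_rpow
              (mul_nonneg (by linarith [pIter_lt_one hn (t := t) (r := r) (j := j) (i := i)])
                (div_nonneg (hr i).le (hr m).le)) h2 (le_of_lt (by positivity))
        have hfin := (IHa i (le_of_eq h.symm)).mul hsecond
        rw [mul_zero] at hfin
        apply hfin.congr'
        filter_upwards [ev_pos] with t ht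
        have h1f : 0 ≤ 1 - pIter t r j i := by
          linarith [pIter_lt_one hn (t := t) (r := r) (j := j) (i := i)]
        rw [W_succ hn, Real.mul_rpow h1f (div_nonneg (hr i).le (hr m).le),
          Real.div_rpow (hr i).le (hr m).le]
        have hb1 : r i ^ (1/t) ≠ 0 := (Real.rpow_pos_of_pos (hr i) _).ne'
        have hb2 : r m ^ (1/t) ≠ 0 := (Real.rpow_pos_of_pos (hr m) _).ne'
        field_simp

lemma pIter_tendsto (hn : 2 ≤ n) (hr : ∀ i, 0 < r i) (hinj : Function.Injective r) {j : ℕ}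
    (hj : j < n) (i : Fin n) :
    Tendsto (fun t => pIter t r j i) L (nhds (if rk r i = j then 1 else 0)) := by
  obtain ⟨IHa, IHb⟩ := key hn hr hinj j
  obtain ⟨μ, hμ⟩ := exists_rk_eq hinj hj
  have h := p_lim hn hr hinj IHa IHb hμ i
  have : (if rk r i = j then (1:ℝ) else 0) = (if i = μ then 1 else 0) := by
    by_cases hc : i = μ
    · subst hc; rw [if_pos hμ, if_pos rfl]
    · rw [if_neg, if_neg hc]
      intro hcc
      exact hc (rk_inj hinj (hcc.trans hμ.symm))
  rw [this]
  exact h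

end TopKAux

/-- For distinct positive keys, as `t → 0⁺` the relaxed `k`-hot output
`aᵢ(t) = Σ_{j=1}^k p_i^j(t)` of the iterative softmax top-k relaxation converges to `1` if
`r̂ᵢ` is among the `k` largest keys (fewer than `k` keys exceed it) and to `0` otherwise. -/
theorem relaxedTopK_tendsto_khot {n : ℕ} (hn : 2 ≤ n) (r : Fin n → ℝ)
    (hr : ∀ i, 0 < r i) (hinj : Function.Injective r) (k : ℕ) (hk : k ≤ n) (i : Fin n) :
    Tendsto (fun t : ℝ => ∑ j ∈ Finset.range k, pIter t r j i) (nhdsWithin 0 (Set.Ioi 0))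
      (nhds (if (Finset.univ.filter fun m => r i < r m).card < k then 1 else 0)) := by
  have h := tendsto_finset_sum (Finset.range k)
    (fun j hj => TopKAux.pIter_tendsto hn hr hinj
      (lt_of_lt_of_le (Finset.mem_range.mp hj) hk) i)
  have heq : (∑ j ∈ Finset.range k, if TopKAux.rk r i = j then (1:ℝ) else 0)
      = if (Finset.univ.filter fun m => r i < r m).card < k then 1 else 0 := by
    have hcongr : ∀ j ∈ Finset.range k,
        (if TopKAux.rk r i = j then (1:ℝ) else 0) = (if j = TopKAux.rk r i then 1 else 0) := by
      intro j _
      by_cases hc : TopKAux.rk r i = j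
      · simp [hc]
      · rw [if_neg hc, if_neg (fun hh => hc hh.symm)]
    rw [Finset.sum_congr rfl hcongr,
      Finset.sum_ite_eq' (Finset.range k) (TopKAux.rk r i) (fun _ => (1:ℝ))]
    simp only [Finset.mem_range]
    rfl
  rw [← heq]
  exact h
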